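/- arXiv:2103.07591 — 4 statements merged into one kernel-verified Lean document; each statement's English description precedes it below -/
import Mathlib

section
/- Let C_0 and C_1 be quantum combs on ⊗_{j=1}^N (H_j^out ⊗ H_j^in) and let ε ∈ (0,1). Then D̃_max^{εD}(C_0||C_1) ≤ D_max^ε(C_0||C_1), where D = ∏_{j=1}^N dim(H_j^out), D_max^ε is the smooth max-relative entropy over combs, and D̃_max is the revised smooth max-relative entropy. -/
open Matrix Filter
open scoped ComplexOrder

attribute [local instance] Classical.propDecidable

noncomputable section

namespace QComb

/-- Dimension of the `j`-th factor of the partial tensor product keeping only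
the first `n` factors (the remaining factors are replaced by trivial spaces). -/
def cut {N : ℕ} (d : Fin N → ℕ) (n : ℕ) (j : Fin N) : ℕ := if j.val < n then d j else 1

/-- Index set of the tensor product of the first `n` factors of the family of
Hilbert spaces `ℂ^{d j}`, `j : Fin N`. -/
def CutIdx {N : ℕ} (d : Fin N → ℕ) (n : ℕ) : Type := ∀ j : Fin N, Fin (cut d n j)

instance {N : ℕ} (d : Fin N → ℕ) (n : ℕ) : Fintype (CutIdx d n) := Pi.instFintype

instance {N : ℕ} (d : Fin N → ℕ) (n : ℕ) : DecidableEq (CutIdx d n) :=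
  fun a b => Fintype.decidablePiFintype a b

/-- Operators on the tensor product `⊗_{j<n} (H_j^out ⊗ H_j^in)` where
`H_j^out = ℂ^{dO j}` and `H_j^in = ℂ^{dI j}`. -/
abbrev CMat {N : ℕ} (dO dI : Fin N → ℕ) (n : ℕ) : Type :=
  Matrix (CutIdx dO n × CutIdx dI n) (CutIdx dO n × CutIdx dI n) ℂ

/-- Extend an index on the first `n` factors by a value `k` in the `n`-th factor. -/
def extendAt {N : ℕ} (d : Fin N → ℕ) (n : Fin N) (x : CutIdx d n.val) (k : Fin (d n)) :
    CutIdx d (n.val + 1) := fun j =>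
  if h : j.val < n.val then
    Fin.cast (show cut d n.val j = cut d (n.val + 1) j by
      simp [cut, h, Nat.lt_succ_of_lt h]) (x j)
  else if h2 : j.val < n.val + 1 then
    Fin.cast (show d n = cut d (n.val + 1) j by
      have hje : j = n := Fin.ext (by omega)
      subst hje; simp [cut, h2]) k
  else
    Fin.cast (show cut d n.val j = cut d (n.val + 1) j by simp [cut, h, h2]) (x j)

/-- Restrict an index on the first `n+1` factors to the first `n` factors. -/
def restrictAt {N : ℕ} (d : Fin N → ℕ) (n : Fin N) (x : CutIdx d (n.val + 1)) :
    CutIdx d n.val := fun j =>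
  if h : j.val < n.val then
    Fin.cast (show cut d (n.val + 1) j = cut d n.val j by
      simp [cut, h, Nat.lt_succ_of_lt h]) (x j)
  else
    ⟨0, by simp only [cut, if_neg h]; omega⟩

/-- The component of an index on the first `n+1` factors in the `n`-th factor. -/
def componentAt {N : ℕ} (d : Fin N → ℕ) (n : Fin N) (x : CutIdx d (n.val + 1)) :
    Fin (d n) :=
  Fin.cast (show cut d (n.val + 1) n = d n by simp [cut]) (x n)

/-- Partial trace over the `n`-th output space. -/
def ptraceO {N : ℕ} (dO : Fin N → ℕ) (n : Fin N) {β : Type} [Fintype β]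
    (M : Matrix (CutIdx dO (n.val + 1) × β) (CutIdx dO (n.val + 1) × β) ℂ) :
    Matrix (CutIdx dO n.val × β) (CutIdx dO n.val × β) ℂ :=
  fun p q => ∑ k : Fin (dO n), M (extendAt dO n p.1 k, p.2) (extendAt dO n q.1 k, q.2)

/-- Partial trace over the `n`-th input space. -/
def ptraceI {N : ℕ} (dI : Fin N → ℕ) (n : Fin N) {α : Type} [Fintype α]
    (M : Matrix (α × CutIdx dI (n.val + 1)) (α × CutIdx dI (n.val + 1)) ℂ) :
    Matrix (α × CutIdx dI n.val) (α × CutIdx dI n.val) ℂ :=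
  fun p q => ∑ k : Fin (dI n), M (p.1, extendAt dI n p.2 k) (q.1, extendAt dI n q.2 k)

/-- Tensoring with the identity on the `n`-th output space. -/
def idTensorO {N : ℕ} (dO : Fin N → ℕ) (n : Fin N) {β : Type}
    (M : Matrix (CutIdx dO n.val × β) (CutIdx dO n.val × β) ℂ) :
    Matrix (CutIdx dO (n.val + 1) × β) (CutIdx dO (n.val + 1) × β) ℂ :=
  fun p q => (if componentAt dO n p.1 = componentAt dO n q.1 then (1 : ℂ) else 0) *
    M (restrictAt dO n p.1, p.2) (restrictAt dO n q.1, q.2)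

/-- Tensoring with the identity on the `n`-th input space. -/
def idTensorI {N : ℕ} (dI : Fin N → ℕ) (n : Fin N) {α : Type}
    (M : Matrix (α × CutIdx dI n.val) (α × CutIdx dI n.val) ℂ) :
    Matrix (α × CutIdx dI (n.val + 1)) (α × CutIdx dI (n.val + 1)) ℂ :=
  fun p q => (if componentAt dI n p.2 = componentAt dI n q.2 then (1 : ℂ) else 0) *
    M (p.1, restrictAt dI n p.2) (q.1, restrictAt dI n q.2)

/-- Transport an operator along an equality of the number of kept factors. -/
def castCMat {N : ℕ} (dO dI : Fin N → ℕ) {a b : ℕ} (h : a = b) (M : CMat dO dI a) :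
    CMat dO dI b := h ▸ M

/-- `C` is a quantum comb on `⊗_{j=1}^N (H_j^out ⊗ H_j^in)`:
it is positive semidefinite and admits a chain `C⁽ⁿ⁾` of positive semidefinite operators with
`C⁽ᴺ⁾ = C`, `C⁽⁰⁾ = 1` and `Tr_{H_n^out} C⁽ⁿ⁾ = I_{H_n^in} ⊗ C⁽ⁿ⁻¹⁾`. -/
def IsQuantumComb {N : ℕ} (dO dI : Fin N → ℕ) (C : CMat dO dI N) : Prop :=
  C.PosSemidef ∧ ∃ Cn : (n : ℕ) → CMat dO dI n,
    (∀ n ≤ N, (Cn n).PosSemidef) ∧ Cn N = C ∧ Cn 0 = 1 ∧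
    ∀ n : Fin N, ptraceO dO n (Cn (n.val + 1)) = idTensorI dI n (Cn n.val)

/-- `Γ` is a dual comb: `Γ = I_{H_N^out} ⊗ Γ⁽ᴺ⁾` for a chain of positive semidefinite operators
`Γ⁽ⁿ⁾` on `H_n^in ⊗ (⊗_{j<n} (H_j^out ⊗ H_j^in))` with
`Tr_{H_n^in} Γ⁽ⁿ⁾ = I_{H_{n-1}^out} ⊗ Γ⁽ⁿ⁻¹⁾` and `Tr_{H_1^in} Γ⁽¹⁾ = 1`.
Here `G m` plays the role of `Γ⁽ᵐ⁺¹⁾`. -/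
def IsDualComb {N : ℕ} (dO dI : Fin N → ℕ) (Γ : CMat dO dI N) : Prop :=
  ∃ G : (m : ℕ) → Matrix (CutIdx dO m × CutIdx dI (m + 1)) (CutIdx dO m × CutIdx dI (m + 1)) ℂ,
    (∀ m < N, (G m).PosSemidef) ∧
    (∀ h0 : 0 < N, ptraceI dI ⟨0, h0⟩ (G 0) = 1) ∧
    (∀ m, ∀ h : m + 1 < N,
      ptraceI dI ⟨m + 1, h⟩ (G (m + 1)) = idTensorO dO ⟨m, Nat.lt_of_succ_lt h⟩ (G m)) ∧
    (∀ m, ∀ h : m + 1 = N,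
      Γ = castCMat dO dI h (idTensorO dO ⟨m, h ▸ Nat.lt_succ_self m⟩ (G m))) ∧
    (N = 0 → Γ = 1)

/-- The trace norm `‖A‖₁ = Tr √(AᴴA)`. -/
def traceNorm {ι : Type} [Fintype ι] [DecidableEq ι] (A : Matrix ι ι ℂ) : ℝ :=
  (((Matrix.posSemidef_conjTranspose_mul_self A).1.eigenvectorUnitary : Matrix ι ι ℂ) *
    Matrix.diagonal (fun i => ((√((Matrix.posSemidef_conjTranspose_mul_self A).1.eigenvalues i) : ℝ) : ℂ)) *
    (star (Matrix.posSemidef_conjTranspose_mul_self A).1.eigenvectorUnitary : Matrix ι ι ℂ)).trace.re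

/-- Square root of a positive semidefinite matrix (junk value `0` otherwise). -/
def msqrt {ι : Type} [Fintype ι] [DecidableEq ι] (A : Matrix ι ι ℂ) : Matrix ι ι ℂ :=
  if h : A.PosSemidef then (h.1.eigenvectorUnitary : Matrix ι ι ℂ) *
    Matrix.diagonal ((↑) ∘ (√·) ∘ h.1.eigenvalues) *
    (star h.1.eigenvectorUnitary : Matrix ι ι ℂ) else 0

/-- Positive part `A₊` of a Hermitian matrix (junk value `0` otherwise). -/
def posPartMat {ι : Type} [Fintype ι] [DecidableEq ι] (A : Matrix ι ι ℂ) : Matrix ι ι ℂ :=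
  if h : A.IsHermitian then h.cfc (fun x => max x 0) else 0

/-- Matrix logarithm in base 2 of a Hermitian matrix via the functional calculus
(junk value `0` otherwise). -/
def mlog {ι : Type} [Fintype ι] [DecidableEq ι] (A : Matrix ι ι ℂ) : Matrix ι ι ℂ :=
  if h : A.IsHermitian then h.cfc (Real.logb 2) else 0

/-- Quantum relative entropy `D(ρ‖σ) = Tr[ρ (log ρ - log σ)]` (base-2 logarithm). -/
def relEnt {ι : Type} [Fintype ι] [DecidableEq ι] (ρ σ : Matrix ι ι ℂ) : ℝ :=
  ((ρ * (mlog ρ - mlog σ)).trace).re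

/-- Support inclusion `supp A ⊆ supp B` (ranges of the associated linear maps). -/
def suppSubset {ι : Type} [Fintype ι] [DecidableEq ι] (A B : Matrix ι ι ℂ) : Prop :=
  LinearMap.range (Matrix.toLin' A) ≤ LinearMap.range (Matrix.toLin' B)

/-- The feasible set of the max-relative entropy `D_max(A‖B)`. -/
def DmaxSet {ι : Type} [Fintype ι] [DecidableEq ι] (A B : Matrix ι ι ℂ) : Set ℝ :=
  {lam : ℝ | 0 ≤ lam ∧ ((lam : ℂ) • B - A).PosSemidef}

/-- Max-relative entropy `D_max(A‖B) = log min {λ ≥ 0 | λB - A ≥ 0}`, equal to `⊤`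
when no such `λ` exists (i.e. when `supp A ⊄ supp B`). -/
def Dmax {ι : Type} [Fintype ι] [DecidableEq ι] (A B : Matrix ι ι ℂ) : EReal :=
  if (DmaxSet A B).Nonempty then ((Real.logb 2 (sInf (DmaxSet A B)) : ℝ) : EReal) else ⊤

/-- Smooth max-relative entropy of quantum combs:
`D_max^ε(C₀‖C₁) = min { D_max(C̃‖C₁) | C̃ a quantum comb, ½‖C̃ - C₀‖₁ ≤ ε }`. -/
def DmaxSmoothComb {N : ℕ} (dO dI : Fin N → ℕ) (ε : ℝ) (C0 C1 : CMat dO dI N) : EReal :=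
  sInf { x : EReal | ∃ C : CMat dO dI N, IsQuantumComb dO dI C ∧
    traceNorm (C - C0) ≤ 2 * ε ∧ x = Dmax C C1 }

/-- Revised smooth max-relative entropy of quantum combs:
`D̃_max^ε(C₀‖C₁) = max_Γ min { D_max(C‖√Γ C₁ √Γ) | C ≥ 0, Tr C = 1,
½‖√Γ C₀ √Γ - C‖₁ ≤ ε }`, the max over dual combs `Γ`. -/
def DmaxTilde {N : ℕ} (dO dI : Fin N → ℕ) (ε : ℝ) (C0 C1 : CMat dO dI N) : EReal :=
  sSup { x : EReal | ∃ Γ : CMat dO dI N, IsDualComb dO dI Γ ∧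
    x = sInf { y : EReal | ∃ C : CMat dO dI N, C.PosSemidef ∧ C.trace = 1 ∧
      traceNorm (msqrt Γ * C0 * msqrt Γ - C) ≤ 2 * ε ∧
      y = Dmax C (msqrt Γ * C1 * msqrt Γ) } }

/-- Hypothesis-testing quantity
`β_δ(C₀‖C₁) = min { Tr[Π √Γ C₁ √Γ] | 0 ≤ Π ≤ I, Γ dual comb, Tr[(I-Π) √Γ C₀ √Γ] ≤ δ }`. -/
def betaHT {N : ℕ} (dO dI : Fin N → ℕ) (δ : ℝ) (C0 C1 : CMat dO dI N) : ℝ :=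
  sInf { b : ℝ | ∃ P Γ : CMat dO dI N, P.PosSemidef ∧ ((1 : CMat dO dI N) - P).PosSemidef ∧
    IsDualComb dO dI Γ ∧
    (((1 - P) * (msqrt Γ * C0 * msqrt Γ)).trace).re ≤ δ ∧
    b = ((P * (msqrt Γ * C1 * msqrt Γ)).trace).re }

/-- Maximum score `w_max(Ω) = max { Tr(Ω C) | C a quantum comb }`. -/
def wmax {N : ℕ} (dO dI : Fin N → ℕ) (Ω : CMat dO dI N) : ℝ :=
  sSup { w : ℝ | ∃ C : CMat dO dI N, IsQuantumComb dO dI C ∧ w = ((Ω * C).trace).re }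

/-- Smooth maximum score `w_max^ε(Ω) = sup { w_max(Ω') | Ω' ≥ 0, Tr Ω' = Tr Ω,
½‖Ω - Ω'‖₁ ≤ ε }`. -/
def wmaxSmooth {N : ℕ} (dO dI : Fin N → ℕ) (ε : ℝ) (Ω : CMat dO dI N) : ℝ :=
  sSup { w : ℝ | ∃ Ω' : CMat dO dI N, Ω'.PosSemidef ∧ traceNorm (Ω - Ω') ≤ 2 * ε ∧
    Ω'.trace = Ω.trace ∧ w = wmax dO dI Ω' }

/-- Dimension function of the `n`-fold concatenated network. -/
def repDim {N : ℕ} (n : ℕ) (d : Fin N → ℕ) : Fin (n * N) → ℕ :=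
  fun j => d ⟨j.val % N, Nat.mod_lt _ (Nat.pos_of_ne_zero fun h =>
    Nat.not_lt_zero j.val (by simpa [h] using j.isLt))⟩

/-- Extract the `i`-th copy of an index of the `n`-fold concatenated network. -/
def sliceIdx {N : ℕ} (n : ℕ) (d : Fin N → ℕ) (i : Fin n) (x : CutIdx (repDim n d) (n * N)) :
    CutIdx d N := fun j =>
  Fin.cast (by
    have hj := j.isLt
    have h1 : (i.val + 1) * N ≤ n * N := Nat.mul_le_mul_right N i.isLt
    have h2 : (i.val + 1) * N = i.val * N + N := Nat.succ_mul _ _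
    have hb : i.val * N + j.val < n * N := by omega
    have hm : (i.val * N + j.val) % N = j.val := by
      rw [Nat.add_comm, Nat.add_mul_mod_self_right]; exact Nat.mod_eq_of_lt hj
    show cut (repDim n d) (n * N) ⟨i.val * N + j.val, hb⟩ = cut d N j
    simp only [cut, repDim, if_pos hb, if_pos hj]
    exact congrArg d (Fin.ext hm))
    (x ⟨i.val * N + j.val, by
      have hj := j.isLt
      have h1 : (i.val + 1) * N ≤ n * N := Nat.mul_le_mul_right N i.isLt
      have h2 : (i.val + 1) * N = i.val * N + N := Nat.succ_mul _ _
      omega⟩)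

/-- The `n`-fold tensor power `Ω^{⊗n}` on the `n`-fold concatenated network. -/
def tpow {N : ℕ} (dO dI : Fin N → ℕ) (n : ℕ) (Ω : CMat dO dI N) :
    CMat (repDim n dO) (repDim n dI) (n * N) :=
  fun p q => ∏ i : Fin n,
    Ω (sliceIdx n dO i p.1, sliceIdx n dI i p.2) (sliceIdx n dO i q.1, sliceIdx n dI i q.2)

/-- Extract the left part of an index of the concatenation of two networks. -/
def appendIdxL {N M : ℕ} (d : Fin N → ℕ) (e : Fin M → ℕ)
    (x : CutIdx (Fin.append d e) (N + M)) : CutIdx d N := fun j =>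
  Fin.cast (by
    show cut (Fin.append d e) (N + M) (Fin.castAdd M j) = cut d N j
    simp only [cut, if_pos (Fin.castAdd M j).isLt, if_pos j.isLt]
    exact Fin.append_left d e j) (x (Fin.castAdd M j))

/-- Extract the right part of an index of the concatenation of two networks. -/
def appendIdxR {N M : ℕ} (d : Fin N → ℕ) (e : Fin M → ℕ)
    (x : CutIdx (Fin.append d e) (N + M)) : CutIdx e M := fun j =>
  Fin.cast (by
    show cut (Fin.append d e) (N + M) (Fin.natAdd N j) = cut e M j
    simp only [cut, if_pos (Fin.natAdd N j).isLt, if_pos j.isLt]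
    exact Fin.append_right d e j) (x (Fin.natAdd N j))

/-- The tensor product `C ⊗ C'` of operators on two networks, as an operator on the
concatenated network with `N + M` steps. -/
def tens2 {N M : ℕ} {dO dI : Fin N → ℕ} {eO eI : Fin M → ℕ}
    (C : CMat dO dI N) (C' : CMat eO eI M) :
    CMat (Fin.append dO eO) (Fin.append dI eI) (N + M) :=
  fun p q =>
    C (appendIdxL dO eO p.1, appendIdxL dI eI p.2) (appendIdxL dO eO q.1, appendIdxL dI eI q.2) *
    C' (appendIdxR dO eO p.1, appendIdxR dI eI p.2) (appendIdxR dO eO q.1, appendIdxR dI eI q.2)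


section SqrtPort
open scoped MatrixOrder
variable {ι : Type} [Fintype ι] [DecidableEq ι]

/-- Square root of a PSD matrix via the eigendecomposition. -/
def _root_.Matrix.PosSemidef.sqrt {A : Matrix ι ι ℂ} (h : A.PosSemidef) : Matrix ι ι ℂ :=
  (h.1.eigenvectorUnitary : Matrix ι ι ℂ) *
    Matrix.diagonal ((↑) ∘ (√·) ∘ h.1.eigenvalues) *
    (star h.1.eigenvectorUnitary : Matrix ι ι ℂ)

lemma _root_.Matrix.PosSemidef.sqrt_eq_cfcSqrt {A : Matrix ι ι ℂ} (h : A.PosSemidef) :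
    h.sqrt = CFC.sqrt A := by
  rw [CFC.sqrt_eq_cfc, cfc_nnreal_eq_real _ A, h.1.cfc_eq]
  simp only [Matrix.PosSemidef.sqrt, IsHermitian.cfc]
  congr 2
  congr 1
  funext i
  simp [max_eq_left (h.eigenvalues_nonneg i)]

lemma _root_.Matrix.PosSemidef.posSemidef_sqrt {A : Matrix ι ι ℂ} (h : A.PosSemidef) :
    h.sqrt.PosSemidef := by
  rw [h.sqrt_eq_cfcSqrt]
  exact (CFC.sqrt_nonneg A).posSemidef

lemma _root_.Matrix.PosSemidef.sqrt_mul_self {A : Matrix ι ι ℂ} (h : A.PosSemidef) :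
    h.sqrt * h.sqrt = A := by
  rw [h.sqrt_eq_cfcSqrt]
  exact CFC.sqrt_mul_sqrt_self A h.nonneg

lemma _root_.Matrix.PosSemidef.eq_sqrt_of_sq_eq {A B : Matrix ι ι ℂ} (hB : B.PosSemidef)
    (hA : A.PosSemidef) (hAB : B ^ 2 = A) : B = hA.sqrt := by
  rw [hA.sqrt_eq_cfcSqrt, eq_comm, CFC.sqrt_eq_iff A B hA.nonneg hB.nonneg, ← sq]
  exact hAB

lemma traceNorm_eq_sqrt (A : Matrix ι ι ℂ) :
    traceNorm A = ((Matrix.posSemidef_conjTranspose_mul_self A).sqrt.trace).re := rfl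

end SqrtPort

section Idx
variable {N : ℕ} (d : Fin N → ℕ) (n : Fin N)

lemma cut_zero (j : Fin N) : cut d 0 j = 1 := by simp [cut]

lemma card_cutIdx_zero : Fintype.card (CutIdx d 0) = 1 := by
  rw [Fintype.card_eq_one_iff]
  refine ⟨fun j => ⟨0, by simp [cut]⟩, fun y => funext fun j => Fin.ext ?_⟩
  have := (y j).isLt
  simp [cut] at this
  simpa using this

lemma restrictAt_extendAt (x : CutIdx d n.val) (k : Fin (d n)) :
    restrictAt d n (extendAt d n x k) = x := by
  funext j
  by_cases h : j.val < n.val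
  · simp [restrictAt, extendAt, h]
  · apply Fin.ext
    have h1 := (x j).isLt
    simp [cut, h] at h1
    simp [restrictAt, h, h1]

lemma componentAt_extendAt (x : CutIdx d n.val) (k : Fin (d n)) :
    componentAt d n (extendAt d n x k) = k := by
  apply Fin.ext
  simp [componentAt, extendAt]

lemma extendAt_restrictAt (y : CutIdx d (n.val + 1)) :
    extendAt d n (restrictAt d n y) (componentAt d n y) = y := by
  funext j
  apply Fin.ext
  by_cases h : j.val < n.val
  · simp [extendAt, restrictAt, h]
  · by_cases h2 : j.val < n.val + 1
    · have hj : j = n := Fin.ext (by omega)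
      subst hj
      simp [extendAt, restrictAt, componentAt, h, h2]
    · have := (y j).isLt
      simp [cut, h2] at this
      simp [extendAt, restrictAt, h, h2, this]

/-- The equivalence `CutIdx d (n+1) ≃ CutIdx d n × Fin (d n)`. -/
def cutSuccEquiv : CutIdx d (n.val + 1) ≃ CutIdx d n.val × Fin (d n) where
  toFun y := (restrictAt d n y, componentAt d n y)
  invFun p := extendAt d n p.1 p.2
  left_inv y := extendAt_restrictAt d n y
  right_inv p := by
    ext : 1
    · exact restrictAt_extendAt d n p.1 p.2
    · exact componentAt_extendAt d n p.1 p.2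

end Idx
section Traces
variable {N : ℕ}

lemma sum_cutSucc (d : Fin N → ℕ) (n : Fin N) {M : Type*} [AddCommMonoid M]
    (g : CutIdx d (n.val + 1) → M) :
    ∑ y, g y = ∑ x : CutIdx d n.val, ∑ k : Fin (d n), g (extendAt d n x k) := by
  rw [Fintype.sum_equiv (cutSuccEquiv d n) g (fun p => g (extendAt d n p.1 p.2))
    (fun y => (congrArg g (extendAt_restrictAt d n y)).symm), Fintype.sum_prod_type]

lemma trace_idTensorO_mul (dO : Fin N → ℕ) (n : Fin N) {β : Type} [Fintype β]
    (A : Matrix (CutIdx dO n.val × β) (CutIdx dO n.val × β) ℂ)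
    (B : Matrix (CutIdx dO (n.val + 1) × β) (CutIdx dO (n.val + 1) × β) ℂ) :
    (idTensorO dO n A * B).trace = (A * ptraceO dO n B).trace := by
  simp only [Matrix.trace, Matrix.diag, Matrix.mul_apply, Fintype.sum_prod_type, ptraceO,
    idTensorO]
  simp only [sum_cutSucc dO n, componentAt_extendAt, restrictAt_extendAt]
  simp only [ite_mul, one_mul, zero_mul, Finset.sum_ite_irrel, Finset.sum_const_zero,
    Finset.sum_ite_eq, Finset.sum_ite_eq', Finset.mem_univ, if_true]
  -- LHS: ∑ x, ∑ k, ∑ a, ∑ x', ∑ a', A (x,a) (x',a') * B (ext x' k, a') (ext x k, a)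
  -- RHS: ∑ x, ∑ a, ∑ x', ∑ a', ∑ k, A (x,a) (x',a') * B (ext x' k, a') (ext x k, a)
  simp only [Finset.mul_sum]
  refine Finset.sum_congr rfl fun x _ => ?_
  rw [Finset.sum_comm]
  refine Finset.sum_congr rfl fun a _ => ?_
  rw [Finset.sum_comm]
  refine Finset.sum_congr rfl fun x' _ => ?_
  rw [Finset.sum_comm]

lemma trace_mul_idTensorI (dI : Fin N → ℕ) (n : Fin N) {α : Type} [Fintype α]
    (A : Matrix (α × CutIdx dI (n.val + 1)) (α × CutIdx dI (n.val + 1)) ℂ)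
    (B : Matrix (α × CutIdx dI n.val) (α × CutIdx dI n.val) ℂ) :
    (A * idTensorI dI n B).trace = (ptraceI dI n A * B).trace := by
  simp only [Matrix.trace, Matrix.diag, Matrix.mul_apply, Fintype.sum_prod_type, ptraceI,
    idTensorI]
  simp only [sum_cutSucc dI n, componentAt_extendAt, restrictAt_extendAt]
  simp only [mul_ite, mul_one, mul_zero, ite_mul, one_mul, zero_mul, Finset.sum_ite_irrel,
    Finset.sum_const_zero, Finset.sum_ite_eq', Finset.sum_ite_eq, Finset.mem_univ, if_true]
  simp only [Finset.sum_mul, Finset.mul_sum]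
  refine Finset.sum_congr rfl fun a _ => ?_
  refine Finset.sum_congr rfl fun x _ => ?_
  rw [Finset.sum_comm]
  refine Finset.sum_congr rfl fun k _ => ?_
  rw [Finset.sum_comm]

lemma trace_idTensorO (dO : Fin N → ℕ) (n : Fin N) {β : Type} [Fintype β]
    (A : Matrix (CutIdx dO n.val × β) (CutIdx dO n.val × β) ℂ) :
    (idTensorO dO n A).trace = (dO n : ℂ) * A.trace := by
  simp only [Matrix.trace, Matrix.diag, Fintype.sum_prod_type, idTensorO]
  simp only [sum_cutSucc dO n, componentAt_extendAt, restrictAt_extendAt, if_true]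
  simp [Finset.mul_sum, mul_comm]

lemma trace_ptraceI (dI : Fin N → ℕ) (n : Fin N) {α : Type} [Fintype α]
    (A : Matrix (α × CutIdx dI (n.val + 1)) (α × CutIdx dI (n.val + 1)) ℂ) :
    (ptraceI dI n A).trace = A.trace := by
  simp only [Matrix.trace, Matrix.diag, Fintype.sum_prod_type, ptraceI]
  simp only [sum_cutSucc dI n]

lemma idTensorO_posSemidef (dO : Fin N → ℕ) (n : Fin N) {β : Type} [Fintype β]
    {A : Matrix (CutIdx dO n.val × β) (CutIdx dO n.val × β) ℂ} (hA : A.PosSemidef) :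
    (idTensorO dO n A).PosSemidef := by
  refine .of_dotProduct_mulVec_nonneg ?_ ?_
  · have hs : ∀ u v, star (A u v) = A v u := fun u v => by
      rw [← Matrix.conjTranspose_apply, hA.1.eq]
    ext p q
    simp only [idTensorO, Matrix.conjTranspose_apply, star_mul',
      apply_ite (star : ℂ → ℂ), star_one, star_zero, hs]
    by_cases h : componentAt dO n p.1 = componentAt dO n q.1
    · rw [if_pos h, if_pos h.symm]
    · rw [if_neg h, if_neg (fun e => h e.symm)]
  · intro x
    simp only [dotProduct, Matrix.mulVec, dotProduct, Fintype.sum_prod_type,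
      idTensorO, Pi.star_apply]
    simp only [sum_cutSucc dO n, componentAt_extendAt, restrictAt_extendAt]
    simp only [ite_mul, one_mul, zero_mul, mul_ite, mul_zero, Finset.sum_ite_irrel,
      Finset.sum_const_zero, Finset.sum_ite_eq, Finset.sum_ite_eq', Finset.mem_univ, if_true]
    rw [Finset.sum_comm]
    refine Finset.sum_nonneg fun k _ => ?_
    have := hA.dotProduct_mulVec_nonneg (fun p => x (extendAt dO n p.1 k, p.2))
    simpa [dotProduct, Matrix.mulVec, Fintype.sum_prod_type, Finset.mul_sum] using this

end Traces
section Pairing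
variable {N : ℕ} (dO dI : Fin N → ℕ)

lemma castCMat_rfl {a : ℕ} (M : CMat dO dI a) : castCMat dO dI rfl M = M := rfl

lemma trace_one_cutZero : (Matrix.trace (1 : Matrix (CutIdx dO 0 × CutIdx dI 0)
    (CutIdx dO 0 × CutIdx dI 0) ℂ)) = 1 := by
  rw [Matrix.trace_one]
  simp [Fintype.card_prod, card_cutIdx_zero]

lemma pairing_aux
    (G : (m : ℕ) → Matrix (CutIdx dO m × CutIdx dI (m + 1))
      (CutIdx dO m × CutIdx dI (m + 1)) ℂ)
    (Cn : (n : ℕ) → CMat dO dI n)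
    (hG1 : ∀ h0 : 0 < N, ptraceI dI ⟨0, h0⟩ (G 0) = 1)
    (hG2 : ∀ m, ∀ h : m + 1 < N,
      ptraceI dI ⟨m + 1, h⟩ (G (m + 1)) = idTensorO dO ⟨m, Nat.lt_of_succ_lt h⟩ (G m))
    (hC0 : Cn 0 = 1)
    (hCstep : ∀ n : Fin N, ptraceO dO n (Cn (n.val + 1)) = idTensorI dI n (Cn n.val)) :
    ∀ n, ∀ h : n < N, ((idTensorO dO ⟨n, h⟩ (G n)) * Cn (n + 1)).trace = 1 := by
  intro n
  induction n with
  | zero =>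
    intro h
    rw [trace_idTensorO_mul, hCstep ⟨0, h⟩, trace_mul_idTensorI dI ⟨0, h⟩ (G 0) (Cn 0), hG1 h, hC0,
      Matrix.one_mul, trace_one_cutZero]
  | succ k ih =>
    intro h
    rw [trace_idTensorO_mul, hCstep ⟨k + 1, h⟩,
      trace_mul_idTensorI dI ⟨k + 1, h⟩ (G (k + 1)) (Cn (k + 1)), hG2 k h,
      ih (Nat.lt_of_succ_lt h)]

lemma traceG_aux
    (G : (m : ℕ) → Matrix (CutIdx dO m × CutIdx dI (m + 1))
      (CutIdx dO m × CutIdx dI (m + 1)) ℂ)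
    (hG1 : ∀ h0 : 0 < N, ptraceI dI ⟨0, h0⟩ (G 0) = 1)
    (hG2 : ∀ m, ∀ h : m + 1 < N,
      ptraceI dI ⟨m + 1, h⟩ (G (m + 1)) = idTensorO dO ⟨m, Nat.lt_of_succ_lt h⟩ (G m)) :
    ∀ n, ∀ h : n < N, (idTensorO dO ⟨n, h⟩ (G n)).trace
      = ∏ j : Fin N, (if j.val ≤ n then (dO j : ℂ) else 1) := by
  intro n
  induction n with
  | zero =>
    intro h
    rw [trace_idTensorO]
    have h1 : (G 0).trace = 1 := by
      rw [← trace_ptraceI dI ⟨0, h⟩ (G 0), hG1 h, trace_one_cutZero]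
    rw [h1, mul_one]
    have : ∀ j : Fin N, (if j.val ≤ 0 then (dO j : ℂ) else 1)
        = (if j = ⟨0, h⟩ then (dO j : ℂ) else 1) := fun j => by
      refine if_congr ?_ rfl rfl
      rw [Nat.le_zero, Fin.ext_iff]
    rw [Finset.prod_congr rfl (fun j _ => this j), Finset.prod_ite_eq' Finset.univ _ _]
    simp
  | succ k ih =>
    intro h
    rw [trace_idTensorO]
    have h1 : (G (k + 1)).trace = (idTensorO dO ⟨k, Nat.lt_of_succ_lt h⟩ (G k)).trace := by
      rw [← trace_ptraceI dI ⟨k + 1, h⟩, hG2 k h]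
    rw [h1, ih (Nat.lt_of_succ_lt h)]
    have h2 : (dO ⟨k + 1, h⟩ : ℂ) = ∏ j : Fin N, (if j = ⟨k + 1, h⟩ then (dO j : ℂ) else 1) := by
      rw [Finset.prod_ite_eq' Finset.univ _ _]
      simp
    rw [h2, ← Finset.prod_mul_distrib]
    refine Finset.prod_congr rfl fun j _ => ?_
    by_cases hj : j = ⟨k + 1, h⟩
    · subst hj
      simp
    · have hjv : j.val ≠ k + 1 := fun e => hj (Fin.ext e)
      rw [if_neg hj, one_mul]
      refine if_congr ?_ rfl rfl
      omega

/-- Packaged properties of a dual comb paired against a quantum comb. -/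
lemma dualComb_props {Γ C : CMat dO dI N} (hΓ : IsDualComb dO dI Γ)
    (hC : IsQuantumComb dO dI C) :
    (Γ * C).trace = 1 ∧ Γ.trace = ∏ j, (dO j : ℂ) ∧ Γ.PosSemidef := by
  obtain ⟨G, hGpsd, hG1, hG2, hG3, hG0⟩ := hΓ
  obtain ⟨hCpsd, Cn, hCnpsd, hCN, hC0, hCstep⟩ := hC
  rcases Nat.eq_zero_or_pos N with hN | hN
  · subst hN
    rw [hG0 rfl, ← hCN, hC0, Matrix.one_mul, trace_one_cutZero]
    refine ⟨rfl, ?_, Matrix.PosSemidef.one⟩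
    simp
  · obtain ⟨m, rfl⟩ : ∃ m, N = m + 1 := ⟨N - 1, (Nat.succ_pred_eq_of_pos hN).symm⟩
    rw [hG3 m rfl, castCMat_rfl]
    refine ⟨?_, ?_, idTensorO_posSemidef dO _ (hGpsd m (Nat.lt_succ_self m))⟩
    · rw [← hCN]
      exact pairing_aux dO dI G Cn hG1 hG2 hC0 hCstep m (Nat.lt_succ_self m)
    · rw [traceG_aux dO dI G hG1 hG2 m (Nat.lt_succ_self m)]
      refine Finset.prod_congr rfl fun j _ => ?_
      rw [if_pos (by omega)]

end Pairing
section Spectral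
variable {ι : Type} [Fintype ι] [DecidableEq ι]

/-- Functional calculus via the eigenvector unitary. -/
def conjD {M : Matrix ι ι ℂ} (hM : M.IsHermitian) (f : ℝ → ℝ) : Matrix ι ι ℂ :=
  (Matrix.IsHermitian.eigenvectorUnitary hM : Matrix ι ι ℂ) *
    Matrix.diagonal (fun i => (f (hM.eigenvalues i) : ℂ)) *
    star (Matrix.IsHermitian.eigenvectorUnitary hM : Matrix ι ι ℂ)

lemma conjD_psd {M : Matrix ι ι ℂ} (hM : M.IsHermitian) (f : ℝ → ℝ)
    (hf : ∀ i, 0 ≤ f (hM.eigenvalues i)) : (conjD hM f).PosSemidef := by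
  have h1 : (Matrix.diagonal (fun i => (f (hM.eigenvalues i) : ℂ))).PosSemidef := by
    refine Matrix.posSemidef_diagonal_iff.mpr fun i => ?_
    exact_mod_cast hf i
  have := h1.mul_mul_conjTranspose_same
    (Matrix.IsHermitian.eigenvectorUnitary hM : Matrix ι ι ℂ)
  rwa [← Matrix.star_eq_conjTranspose] at this

lemma conjD_trace {M : Matrix ι ι ℂ} (hM : M.IsHermitian) (f : ℝ → ℝ) :
    (conjD hM f).trace = ∑ i, (f (hM.eigenvalues i) : ℂ) := by
  rw [conjD, Matrix.trace_mul_cycle,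
    (Matrix.mem_unitaryGroup_iff'.mp (Matrix.IsHermitian.eigenvectorUnitary hM).2),
    Matrix.one_mul, Matrix.trace_diagonal]

lemma conjD_mul {M : Matrix ι ι ℂ} (hM : M.IsHermitian) (f g : ℝ → ℝ) :
    conjD hM f * conjD hM g = conjD hM (fun x => f x * g x) := by
  rw [conjD, conjD, conjD]
  rw [show ∀ A B C D E : Matrix ι ι ℂ, A * B * C * (A * D * E) = A * B * (C * A) * D * E
    from fun A B C D E => by noncomm_ring]
  rw [(Matrix.mem_unitaryGroup_iff'.mp (Matrix.IsHermitian.eigenvectorUnitary hM).2),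
    Matrix.mul_one, Matrix.mul_assoc _ (Matrix.diagonal _) (Matrix.diagonal _),
    Matrix.diagonal_mul_diagonal]
  congr 2
  funext i
  push_cast
  rfl

lemma conjD_id {M : Matrix ι ι ℂ} (hM : M.IsHermitian) : conjD hM id = M := by
  rw [conjD]
  exact hM.spectral_theorem.symm

lemma conjD_sub {M : Matrix ι ι ℂ} (hM : M.IsHermitian) (f g : ℝ → ℝ) :
    conjD hM f - conjD hM g = conjD hM (fun x => f x - g x) := by
  rw [conjD, conjD, conjD, ← Matrix.sub_mul, ← Matrix.mul_sub, Matrix.diagonal_sub]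
  push_cast
  rfl

lemma conjD_one {M : Matrix ι ι ℂ} (hM : M.IsHermitian) : conjD hM (fun _ => 1) = 1 := by
  rw [conjD]
  have : (Matrix.diagonal (fun _ : ι => ((1 : ℝ) : ℂ))) = 1 := by
    simp [Matrix.diagonal_one]
  rw [this, Matrix.mul_one,
    Matrix.mem_unitaryGroup_iff.mp (Matrix.IsHermitian.eigenvectorUnitary hM).2]

lemma conjD_smul_one {M : Matrix ι ι ℂ} (hM : M.IsHermitian) (c : ℝ) :
    conjD hM (fun _ => c) = (c : ℂ) • 1 := by
  rw [conjD, Matrix.smul_one_eq_diagonal]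
  have : (Matrix.diagonal (fun _ : ι => ((c : ℝ) : ℂ))) = Matrix.diagonal (fun _ => (c : ℂ)) := rfl
  rw [this, ← Matrix.smul_one_eq_diagonal]
  rw [Matrix.mul_smul, Matrix.mul_one, Matrix.smul_mul,
    Matrix.mem_unitaryGroup_iff.mp (Matrix.IsHermitian.eigenvectorUnitary hM).2]

lemma conjD_neg {M : Matrix ι ι ℂ} (hM : M.IsHermitian) (f : ℝ → ℝ) :
    conjD hM (fun x => - f x) = - conjD hM f := by
  rw [conjD, conjD]
  rw [show (fun i => ((- f (hM.eigenvalues i) : ℝ) : ℂ))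
    = (fun i => -((f (hM.eigenvalues i) : ℝ) : ℂ)) from by funext i; push_cast; rfl]
  rw [← Matrix.diagonal_neg, Matrix.mul_neg, Matrix.neg_mul]

/-- Diagonal entries of a PSD matrix are nonnegative, hence so is the trace. -/
lemma psd_trace_nonneg {A : Matrix ι ι ℂ} (hA : A.PosSemidef) : 0 ≤ A.trace := by
  refine Finset.sum_nonneg fun i _ => ?_
  have h := hA.dotProduct_mulVec_nonneg (Pi.single i 1)
  have he : dotProduct (star (Pi.single i 1)) (A *ᵥ Pi.single i 1) = A i i := by
    simp [dotProduct, Matrix.mulVec, Pi.single_apply, apply_ite (star : ℂ → ℂ),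
      ite_mul, mul_ite, Finset.sum_ite_eq, Finset.sum_ite_eq']
  rwa [he] at h

lemma psd_trace_re_nonneg {A : Matrix ι ι ℂ} (hA : A.PosSemidef) : 0 ≤ (A.trace).re :=
  (Complex.le_def.mp (psd_trace_nonneg hA)).1

/-- `Tr(AB) ≥ 0` for PSD `A`, `B`. -/
lemma psd_mul_trace_re_nonneg {A B : Matrix ι ι ℂ} (hA : A.PosSemidef) (hB : B.PosSemidef) :
    0 ≤ ((A * B).trace).re := by
  have h1 : (A * B).trace = (hA.sqrt * B * hA.sqrt).trace := by
    rw [Matrix.trace_mul_comm (hA.sqrt * B) hA.sqrt, ← Matrix.mul_assoc, hA.sqrt_mul_self]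
  rw [h1]
  have h2 : (hA.sqrt * B * hA.sqrt).PosSemidef := by
    have := hB.mul_mul_conjTranspose_same hA.sqrt
    rwa [hA.posSemidef_sqrt.1.eq] at this
  exact psd_trace_re_nonneg h2

lemma trace_sqrt_conj {Γ X : Matrix ι ι ℂ} (hΓ : Γ.PosSemidef) :
    (hΓ.sqrt * X * hΓ.sqrt).trace = (Γ * X).trace := by
  rw [Matrix.trace_mul_comm (hΓ.sqrt * X) hΓ.sqrt, ← Matrix.mul_assoc, hΓ.sqrt_mul_self]

/-- Trace norm of a Hermitian matrix equals the sum of absolute eigenvalues. -/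
lemma traceNorm_hermitian {M : Matrix ι ι ℂ} (hM : M.IsHermitian) :
    traceNorm M = ∑ i, |hM.eigenvalues i| := by
  have hS : (conjD hM (fun x => |x|)).PosSemidef := conjD_psd hM _ (fun i => abs_nonneg _)
  have hsq : (conjD hM (fun x => |x|)) ^ 2 = Mᴴ * M := by
    have h1 := conjD_mul hM (fun x => |x|) (fun x => |x|)
    have h2 := conjD_mul hM id id
    rw [conjD_id hM] at h2
    rw [hM.eq, pow_two, h1, h2]
    congr 1
    funext x
    simp [abs_mul_abs_self]
  have heq := hS.eq_sqrt_of_sq_eq (Matrix.posSemidef_conjTranspose_mul_self M) hsq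
  rw [traceNorm_eq_sqrt, ← heq, conjD_trace]
  rw [show (∑ i, ((|hM.eigenvalues i| : ℝ) : ℂ)) = ((∑ i, |hM.eigenvalues i| : ℝ) : ℂ) by
    push_cast; rfl]
  rw [Complex.ofReal_re]

/-- `‖A - B‖₁ ≤ Tr A + Tr B` for PSD `A`, `B`. -/
lemma traceNorm_sub_le_psd {A B : Matrix ι ι ℂ} (hA : A.PosSemidef) (hB : B.PosSemidef) :
    traceNorm (A - B) ≤ (A.trace).re + (B.trace).re := by
  have hM : (A - B).IsHermitian := hA.1.sub hB.1
  set f : ℝ → ℝ := fun x => if 0 ≤ x then 1 else -1 with hf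
  have habs : ∀ x : ℝ, f x * x = |x| := fun x => by
    by_cases h : 0 ≤ x
    · simp [hf, h, abs_of_nonneg h]
    · simp [hf, h, abs_of_neg (lt_of_not_ge h)]
    
  have h1S : (1 - conjD hM f).PosSemidef := by
    rw [← conjD_one hM, conjD_sub]
    refine conjD_psd hM _ fun i => ?_
    by_cases h : 0 ≤ hM.eigenvalues i <;> simp [hf, h]
  have h1S' : (1 + conjD hM f).PosSemidef := by
    have e : (1 : Matrix ι ι ℂ) + conjD hM f = conjD hM (fun x => 1 - (- f x)) := by
      rw [← conjD_sub hM, conjD_neg, conjD_one, sub_neg_eq_add]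
    rw [e]
    refine conjD_psd hM _ fun i => ?_
    by_cases h : 0 ≤ hM.eigenvalues i <;> simp [hf, h]
  -- trace of S * (A - B)
  have hmulkey := conjD_mul hM f id
  rw [conjD_id hM] at hmulkey
  have e : ∀ i : ι, (((fun x => f x * id x) (hM.eigenvalues i) : ℝ) : ℂ)
      = ((|hM.eigenvalues i| : ℝ) : ℂ) := fun i => by
    simp only [id_eq]
    rw [habs]
  have key : ((conjD hM f * (A - B)).trace).re = traceNorm (A - B) := by
    rw [hmulkey, conjD_trace, traceNorm_hermitian hM,
      Finset.sum_congr rfl (fun i (_ : i ∈ Finset.univ) => e i),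
      show (∑ i, ((|hM.eigenvalues i| : ℝ) : ℂ)) = ((∑ i, |hM.eigenvalues i| : ℝ) : ℂ) from by
        push_cast; rfl,
      Complex.ofReal_re]
  have hSA : ((conjD hM f * A).trace).re ≤ (A.trace).re := by
    have := psd_mul_trace_re_nonneg h1S hA
    rw [Matrix.sub_mul, Matrix.one_mul, Matrix.trace_sub] at this
    simp only [Complex.sub_re] at this
    linarith
  have hSB : -((B.trace).re) ≤ ((conjD hM f * B).trace).re := by
    have := psd_mul_trace_re_nonneg h1S' hB
    rw [Matrix.add_mul, Matrix.one_mul, Matrix.trace_add] at this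
    simp only [Complex.add_re] at this
    linarith
  have hsplit : (conjD hM f * (A - B)).trace = (conjD hM f * A).trace - (conjD hM f * B).trace := by
    rw [Matrix.mul_sub, Matrix.trace_sub]
  rw [← key, hsplit]
  simp only [Complex.sub_re]
  linarith

/-- Jordan decomposition of a Hermitian matrix. -/
lemma jordan {M : Matrix ι ι ℂ} (hM : M.IsHermitian) :
    ∃ P Q : Matrix ι ι ℂ, P.PosSemidef ∧ Q.PosSemidef ∧ M = P - Q ∧
      (P.trace).re + (Q.trace).re = traceNorm M := by
  refine ⟨conjD hM (fun x => max x 0), conjD hM (fun x => max (-x) 0),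
    conjD_psd hM _ (fun i => le_max_right _ _), conjD_psd hM _ (fun i => le_max_right _ _),
    ?_, ?_⟩
  · have e := conjD_sub hM (fun x => max x 0) (fun x => max (-x) 0)
    have e2 : (fun x : ℝ => max x 0 - max (-x) 0) = (id : ℝ → ℝ) := by
      funext x
      rcases le_total x 0 with h | h
      · simp [max_eq_right h, max_eq_left (neg_nonneg.mpr h)]
      · simp [max_eq_left h, max_eq_right (neg_nonpos.mpr h)]
    rw [e2, conjD_id hM] at e
    exact e.symm
  · rw [conjD_trace, conjD_trace, traceNorm_hermitian hM]
    rw [show (∑ i, ((max (hM.eigenvalues i) 0 : ℝ) : ℂ))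
        = ((∑ i, max (hM.eigenvalues i) 0 : ℝ) : ℂ) by push_cast; rfl]
    rw [show (∑ i, ((max (-hM.eigenvalues i) 0 : ℝ) : ℂ))
        = ((∑ i, max (-hM.eigenvalues i) 0 : ℝ) : ℂ) by push_cast; rfl]
    rw [Complex.ofReal_re, Complex.ofReal_re, ← Finset.sum_add_distrib]
    refine Finset.sum_congr rfl fun i _ => ?_
    rcases le_total (hM.eigenvalues i) 0 with h | h
    · rw [max_eq_right h, max_eq_left (neg_nonneg.mpr h), abs_of_nonpos h]
      ring
    · rw [max_eq_left h, max_eq_right (neg_nonpos.mpr h), abs_of_nonneg h]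
      ring

/-- `Γ ≤ (Tr Γ) • 1` for PSD `Γ`, in trace-pairing form:
`Re Tr(Γ P) ≤ Re Tr Γ * Re Tr P` for PSD `Γ, P`. -/
lemma trace_mul_le_trace_mul_trace {Γ P : Matrix ι ι ℂ} (hΓ : Γ.PosSemidef)
    (hP : P.PosSemidef) : ((Γ * P).trace).re ≤ (Γ.trace).re * (P.trace).re := by
  set t : ℝ := ∑ i, hΓ.1.eigenvalues i with ht
  have htr : Γ.trace = (t : ℂ) := by
    have h := conjD_trace hΓ.1 id
    rw [conjD_id hΓ.1] at h
    rw [h, ht]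
    simp only [id_eq]
    push_cast
    rfl
  have hdiff : ((t : ℂ) • 1 - Γ).PosSemidef := by
    have e := conjD_sub hΓ.1 (fun _ => t) id
    rw [conjD_id hΓ.1, conjD_smul_one hΓ.1] at e
    rw [e]
    refine conjD_psd hΓ.1 _ fun i => ?_
    simp only [id_eq, sub_nonneg, ht]
    exact Finset.single_le_sum (f := fun i => hΓ.1.eigenvalues i)
      (fun j _ => hΓ.eigenvalues_nonneg j) (Finset.mem_univ i)
  have h0 : 0 ≤ ((((t : ℂ) • 1 - Γ) * P).trace).re := psd_mul_trace_re_nonneg hdiff hP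
  rw [Matrix.sub_mul, Matrix.smul_mul, Matrix.one_mul, Matrix.trace_sub, Matrix.trace_smul] at h0
  simp only [Complex.sub_re, smul_eq_mul, Complex.mul_re, Complex.ofReal_re,
    Complex.ofReal_im, zero_mul, sub_zero] at h0
  rw [htr, Complex.ofReal_re]
  linarith

/-- Key sandwich bound: `‖√Γ M √Γ‖₁ ≤ Re Tr Γ * ‖M‖₁` for PSD `Γ` and Hermitian `M`. -/
lemma traceNorm_sandwich {Γ M : Matrix ι ι ℂ} (hΓ : Γ.PosSemidef) (hM : M.IsHermitian) :
    traceNorm (hΓ.sqrt * M * hΓ.sqrt) ≤ (Γ.trace).re * traceNorm M := by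
  obtain ⟨P, Q, hP, hQ, hPQ, htr⟩ := jordan hM
  have hconj : ∀ {X : Matrix ι ι ℂ}, X.PosSemidef → (hΓ.sqrt * X * hΓ.sqrt).PosSemidef := by
    intro X hX
    have := hX.mul_mul_conjTranspose_same hΓ.sqrt
    rwa [hΓ.posSemidef_sqrt.1.eq] at this
  have hsplit : hΓ.sqrt * M * hΓ.sqrt = hΓ.sqrt * P * hΓ.sqrt - hΓ.sqrt * Q * hΓ.sqrt := by
    rw [hPQ]
    noncomm_ring
  have h1 := traceNorm_sub_le_psd (hconj hP) (hconj hQ)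
  rw [← hsplit] at h1
  rw [trace_sqrt_conj hΓ, trace_sqrt_conj hΓ] at h1
  have h2 := trace_mul_le_trace_mul_trace hΓ hP
  have h3 := trace_mul_le_trace_mul_trace hΓ hQ
  calc traceNorm (hΓ.sqrt * M * hΓ.sqrt) ≤ ((Γ * P).trace).re + ((Γ * Q).trace).re := h1
    _ ≤ (Γ.trace).re * ((P.trace).re + (Q.trace).re) := by
        rw [mul_add]
        exact add_le_add h2 h3
    _ = (Γ.trace).re * traceNorm M := by rw [htr]

lemma sqrt_congr {A B : Matrix ι ι ℂ} (h : A = B) (hA : A.PosSemidef) (hB : B.PosSemidef) :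
    hA.sqrt = hB.sqrt := by subst h; rfl

lemma traceNorm_neg (A : Matrix ι ι ℂ) : traceNorm (-A) = traceNorm A := by
  have h : (-A)ᴴ * (-A) = Aᴴ * A := by simp
  rw [traceNorm_eq_sqrt, traceNorm_eq_sqrt, sqrt_congr h (Matrix.posSemidef_conjTranspose_mul_self (-A))
    (Matrix.posSemidef_conjTranspose_mul_self A)]

end Spectral
section DmaxLemma
variable {ι : Type} [Fintype ι] [DecidableEq ι]

lemma dmax_conj_le {Γ Ct C1 : Matrix ι ι ℂ} (hΓ : Γ.PosSemidef)
    (htr : (hΓ.sqrt * Ct * hΓ.sqrt).trace = 1) :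
    Dmax (hΓ.sqrt * Ct * hΓ.sqrt) (hΓ.sqrt * C1 * hΓ.sqrt) ≤ Dmax Ct C1 := by
  set C := hΓ.sqrt * Ct * hΓ.sqrt with hC
  set B := hΓ.sqrt * C1 * hΓ.sqrt with hB
  have hsub : DmaxSet Ct C1 ⊆ DmaxSet C B := by
    rintro lam ⟨hl0, hpsd⟩
    refine ⟨hl0, ?_⟩
    have he : (lam : ℂ) • B - C = hΓ.sqrt * ((lam : ℂ) • C1 - Ct) * hΓ.sqrt := by
      rw [hB, hC, Matrix.mul_sub, Matrix.sub_mul, Matrix.mul_smul, Matrix.smul_mul]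
    rw [he]
    have := hpsd.mul_mul_conjTranspose_same hΓ.sqrt
    rwa [hΓ.posSemidef_sqrt.1.eq] at this
  by_cases hne : (DmaxSet Ct C1).Nonempty
  · have hne2 : (DmaxSet C B).Nonempty := hne.mono hsub
    rw [Dmax, Dmax, if_pos hne, if_pos hne2]
    have hCre : (C.trace).re = 1 := by rw [htr]; rfl
    have hBtrace : ∀ lam ∈ DmaxSet C B, 1 ≤ lam * (B.trace).re := by
      rintro lam ⟨hl0, hpsd⟩
      have h0 := psd_trace_re_nonneg hpsd
      rw [Matrix.trace_sub, Matrix.trace_smul] at h0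
      simp only [Complex.sub_re, smul_eq_mul, Complex.mul_re, Complex.ofReal_re,
        Complex.ofReal_im, zero_mul, sub_zero] at h0
      rw [hCre] at h0
      linarith
    have htB : 0 < (B.trace).re := by
      obtain ⟨lam, hlam⟩ := hne2
      have h1 := hBtrace lam hlam
      have hl0 := hlam.1
      nlinarith
    have hlb : ∀ lam ∈ DmaxSet C B, 1 / (B.trace).re ≤ lam := by
      intro lam hlam
      rw [div_le_iff₀ htB]
      exact hBtrace lam hlam
    have hc : 0 < 1 / (B.trace).re := by positivity
    have hbdd : BddBelow (DmaxSet C B) := ⟨1 / (B.trace).re, fun lam h => hlb lam h⟩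
    have hinf2 : 1 / (B.trace).re ≤ sInf (DmaxSet C B) := le_csInf hne2 hlb
    have hle : sInf (DmaxSet C B) ≤ sInf (DmaxSet Ct C1) := csInf_le_csInf hbdd hne hsub
    apply EReal.coe_le_coe_iff.mpr
    exact Real.logb_le_logb_of_le one_lt_two (lt_of_lt_of_le hc hinf2) hle
  · simp only [Dmax]
    rw [if_neg hne]
    exact le_top

end DmaxLemma

/-- For quantum combs `C₀, C₁` and `ε ∈ (0,1)`,
`D̃_max^{εD}(C₀‖C₁) ≤ D_max^ε(C₀‖C₁)` where `D = ∏_j dim H_j^out`. -/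
theorem dmaxTilde_le_dmaxSmooth {N : ℕ} (dO dI : Fin N → ℕ) (C0 C1 : CMat dO dI N)
    (h0 : IsQuantumComb dO dI C0) (h1 : IsQuantumComb dO dI C1)
    (ε : ℝ) (hε : ε ∈ Set.Ioo (0 : ℝ) 1) :
    DmaxTilde dO dI (ε * ∏ j, (dO j : ℝ)) C0 C1 ≤ DmaxSmoothComb dO dI ε C0 C1 := by
  refine sSup_le fun x hx => le_sInf fun y hy => ?_
  obtain ⟨Γ, hΓdual, hxeq⟩ := hx
  obtain ⟨Ct, hCtcomb, hCtnorm, hyeq⟩ := hy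
  subst hxeq hyeq
  obtain ⟨hpair, htrΓ, hΓpsd⟩ := dualComb_props dO dI hΓdual hCtcomb
  have hmsqrt : msqrt Γ = hΓpsd.sqrt := dif_pos hΓpsd
  set s := hΓpsd.sqrt with hs
  set C := s * Ct * s with hCdef
  have hCpsd : C.PosSemidef := by
    have := hCtcomb.1.mul_mul_conjTranspose_same s
    rwa [hΓpsd.posSemidef_sqrt.1.eq] at this
  have hCtr : C.trace = 1 := by
    rw [hCdef, trace_sqrt_conj hΓpsd]
    exact hpair
  -- the trace norm bound
  have hD : (Γ.trace).re = ∏ j, (dO j : ℝ) := by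
    rw [htrΓ, show (∏ j, (dO j : ℂ)) = ((∏ j, (dO j : ℝ) : ℝ) : ℂ) by push_cast; rfl,
      Complex.ofReal_re]
  have hD0 : (0 : ℝ) ≤ ∏ j, (dO j : ℝ) := Finset.prod_nonneg fun j _ => Nat.cast_nonneg _
  have hher : (C0 - Ct).IsHermitian := h0.1.1.sub hCtcomb.1.1
  have hbound : traceNorm (msqrt Γ * C0 * msqrt Γ - C) ≤ 2 * (ε * ∏ j, (dO j : ℝ)) := by
    have hdiff : msqrt Γ * C0 * msqrt Γ - C = s * (C0 - Ct) * s := by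
      rw [hmsqrt, hCdef]
      noncomm_ring
    have hsand := traceNorm_sandwich hΓpsd hher
    have hflip : traceNorm (C0 - Ct) = traceNorm (Ct - C0) := by
      rw [← neg_sub Ct C0, traceNorm_neg]
    rw [hdiff]
    calc traceNorm (s * (C0 - Ct) * s) ≤ (Γ.trace).re * traceNorm (C0 - Ct) := hsand
      _ ≤ (∏ j, (dO j : ℝ)) * (2 * ε) := by
          rw [hD, hflip]
          exact mul_le_mul_of_nonneg_left hCtnorm hD0
      _ = 2 * (ε * ∏ j, (dO j : ℝ)) := by ring
  -- the Dmax bound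
  have hdm : Dmax C (msqrt Γ * C1 * msqrt Γ) ≤ Dmax Ct C1 := by
    rw [hmsqrt]
    exact dmax_conj_le hΓpsd hCtr
  refine le_trans (sInf_le ?_) hdm
  exact ⟨C, hCpsd, hCtr, hbound, rfl⟩

end QComb
end
end

section
/- Let M be an operator on H_1 ⊗ H_0 and N an operator on H_2 ⊗ H_1. If M and N are both Hermitian, then their link product N * M = Tr_{H_1}[(I_{H_2} ⊗ M^{T_1})(N ⊗ I_{H_0})] is Hermitian. -/
open Matrix
open scoped ComplexOrder

noncomputable section

namespace QLink

/-- Kronecker (tensor) product of two square matrices, on the product index set. -/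
def kron {α β : Type} (A : Matrix α α ℂ) (B : Matrix β β ℂ) :
    Matrix (α × β) (α × β) ℂ := fun p q => A p.1 q.1 * B p.2 q.2

/-- Partial transpose on the first tensor factor. -/
def ptransposeFst {α β : Type} (M : Matrix (α × β) (α × β) ℂ) : Matrix (α × β) (α × β) ℂ :=
  fun p q => M (q.1, p.2) (p.1, q.2)

/-- Partial transpose on the second tensor factor. -/
def ptransposeSnd {α β : Type} (M : Matrix (α × β) (α × β) ℂ) : Matrix (α × β) (α × β) ℂ :=
  fun p q => M (p.1, q.2) (q.1, p.2)

/-- Partial trace over the middle tensor factor. -/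
def ptraceMid {α β γ : Type} [Fintype β] (X : Matrix (α × β × γ) (α × β × γ) ℂ) :
    Matrix (α × γ) (α × γ) ℂ :=
  fun p q => ∑ b : β, X (p.1, b, p.2) (q.1, b, q.2)

/-- Partial trace over the first tensor factor. -/
def ptraceFst {α β : Type} [Fintype α] (X : Matrix (α × β) (α × β) ℂ) : Matrix β β ℂ :=
  fun p q => ∑ a : α, X (a, p) (a, q)

/-- The link product `N * M = Tr_{H₁}[(I_{H₂} ⊗ M^{T₁})(N ⊗ I_{H₀})]`, an operator on
`H₂ ⊗ H₀`, for `M` on `H₁ ⊗ H₀` and `N` on `H₂ ⊗ H₁`. -/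
def linkNM {α0 α1 α2 : Type} [Fintype α0] [Fintype α1] [Fintype α2]
    [DecidableEq α0] [DecidableEq α1] [DecidableEq α2]
    (Nm : Matrix (α2 × α1) (α2 × α1) ℂ) (M : Matrix (α1 × α0) (α1 × α0) ℂ) :
    Matrix (α2 × α0) (α2 × α0) ℂ :=
  ptraceMid ((kron (1 : Matrix α2 α2 ℂ) (ptransposeFst M)) *
    (Matrix.reindex (Equiv.prodAssoc α2 α1 α0) (Equiv.prodAssoc α2 α1 α0)
      (kron Nm (1 : Matrix α0 α0 ℂ))))

/-- The cyclic reordering `H₁ ⊗ H₀ ⊗ H₂ ≃ H₀ ⊗ H₂ ⊗ H₁`. -/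
def cyc (α1 α0 α2 : Type) : α1 × α0 × α2 ≃ α0 × α2 × α1 where
  toFun p := (p.2.1, p.2.2, p.1)
  invFun p := (p.2.2, p.1, p.2.1)
  left_inv p := rfl
  right_inv p := rfl

/-- The link product `M * N = Tr_{H₁}[(I_{H₀} ⊗ N^{T₁})(M ⊗ I_{H₂})]`, an operator on
`H₀ ⊗ H₂`, for `M` on `H₁ ⊗ H₀` and `N` on `H₂ ⊗ H₁` (here `N^{T₁}` is the partial
transpose of `N` on its `H₁` factor). -/
def linkMN {α0 α1 α2 : Type} [Fintype α0] [Fintype α1] [Fintype α2]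
    [DecidableEq α0] [DecidableEq α1] [DecidableEq α2]
    (M : Matrix (α1 × α0) (α1 × α0) ℂ) (Nm : Matrix (α2 × α1) (α2 × α1) ℂ) :
    Matrix (α0 × α2) (α0 × α2) ℂ :=
  ptraceFst ((Matrix.reindex (cyc α1 α0 α2).symm (cyc α1 α0 α2).symm
      (kron (1 : Matrix α0 α0 ℂ) (ptransposeSnd Nm))) *
    (Matrix.reindex (Equiv.prodAssoc α1 α0 α2) (Equiv.prodAssoc α1 α0 α2)
      (kron M (1 : Matrix α2 α2 ℂ))))

/-- `𝓜 ⊗ id_{L(K)}` applied to an operator on `H₀ ⊗ K`. -/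
def mapTensorId {α0 α1 : Type} (f : Matrix α0 α0 ℂ →ₗ[ℂ] Matrix α1 α1 ℂ) (K : Type)
    (X : Matrix (α0 × K) (α0 × K) ℂ) : Matrix (α1 × K) (α1 × K) ℂ :=
  fun p q => f (fun x y => X (x, p.2) (y, q.2)) p.1 q.1

/-- The unnormalized maximally entangled vector `|Ψ⟩ = Σ_i |i⟩|i⟩` on `H₀ ⊗ H₀`. -/
def maxEntVec (α0 : Type) [DecidableEq α0] : α0 × α0 → ℂ :=
  fun p => if p.1 = p.2 then 1 else 0

/-- The Choi-Jamiolkowski operator `M = (𝓜 ⊗ id)(|Ψ⟩⟨Ψ|)` of a linear map `𝓜`. -/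
def choi {α0 α1 : Type} [DecidableEq α0]
    (f : Matrix α0 α0 ℂ →ₗ[ℂ] Matrix α1 α1 ℂ) : Matrix (α1 × α0) (α1 × α0) ℂ :=
  mapTensorId f α0 (Matrix.vecMulVec (maxEntVec α0) (star (maxEntVec α0)))


lemma linkNM_apply {α0 α1 α2 : Type} [Fintype α0] [Fintype α1] [Fintype α2]
    [DecidableEq α0] [DecidableEq α1] [DecidableEq α2]
    (Nm : Matrix (α2 × α1) (α2 × α1) ℂ) (M : Matrix (α1 × α0) (α1 × α0) ℂ)
    (p q : α2 × α0) :
    linkNM Nm M p q = ∑ b : α1, ∑ k : α1, M (k, p.2) (b, q.2) * Nm (p.1, k) (q.1, b) := by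
  simp only [linkNM, ptraceMid, Matrix.mul_apply, kron, ptransposeFst,
    Matrix.reindex_apply, Matrix.submatrix_apply, Equiv.prodAssoc]
  refine Finset.sum_congr rfl fun b _ => ?_
  rw [Fintype.sum_prod_type]
  rw [Finset.sum_eq_single p.1 (by intro a _ ha; simp [Matrix.one_apply, Ne.symm ha]) (by simp)]
  rw [Fintype.sum_prod_type]
  refine Finset.sum_congr rfl fun k _ => ?_
  rw [Finset.sum_eq_single q.2 (by intro a _ ha; simp [Matrix.one_apply, ha])
    (by simp)]
  simp [Matrix.one_apply]

/-- The link product of Hermitian operators is Hermitian. -/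
theorem linkNM_isHermitian {α0 α1 α2 : Type} [Fintype α0] [Fintype α1] [Fintype α2]
    [DecidableEq α0] [DecidableEq α1] [DecidableEq α2]
    (M : Matrix (α1 × α0) (α1 × α0) ℂ) (Nm : Matrix (α2 × α1) (α2 × α1) ℂ)
    (hM : M.IsHermitian) (hN : Nm.IsHermitian) :
    (linkNM Nm M).IsHermitian := by
  ext p q
  rw [Matrix.conjTranspose_apply, linkNM_apply, linkNM_apply, Finset.sum_comm]
  rw [star_sum]
  refine Finset.sum_congr rfl fun b _ => ?_
  rw [star_sum]
  refine Finset.sum_congr rfl fun k _ => ?_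
  rw [star_mul']
  rw [← hM.apply, ← hN.apply]
  simp [Matrix.conjTranspose_apply]

end QLink
end
end

section
/- Let M be an operator on H_1 ⊗ H_0 and N an operator on H_2 ⊗ H_1. Then N * M = SWAP_{H_0,H_2} (M * N) SWAP_{H_0,H_2}, where M * N = Tr_{H_1}[(I_{H_0} ⊗ N^{T_1})(M ⊗ I_{H_2})] is an operator on H_0 ⊗ H_2 and SWAP_{H_0,H_2} is the unitary that exchanges the tensor factors H_0 and H_2. -/
open Matrix
open scoped ComplexOrder

noncomputable section

namespace QLink

/-- `N * M = SWAP_{H₀,H₂} (M * N) SWAP_{H₀,H₂}`: the two link products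
agree up to the swap of the tensor factors `H₀` and `H₂`. -/
theorem linkNM_eq_swap_linkMN {α0 α1 α2 : Type} [Fintype α0] [Fintype α1] [Fintype α2]
    [DecidableEq α0] [DecidableEq α1] [DecidableEq α2]
    (M : Matrix (α1 × α0) (α1 × α0) ℂ) (Nm : Matrix (α2 × α1) (α2 × α1) ℂ) :
    linkNM Nm M =
      Matrix.reindex (Equiv.prodComm α0 α2) (Equiv.prodComm α0 α2) (linkMN M Nm) := by
  ext ⟨c, a⟩ ⟨c', a'⟩
  simp [linkNM, linkMN, ptraceMid, ptraceFst, Matrix.mul_apply, kron, ptransposeFst,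
    ptransposeSnd, cyc, Matrix.one_apply, Fintype.sum_prod_type, Finset.mul_sum,
    Finset.sum_mul, mul_comm]

end QLink
end
end

section
/- Let 𝓜 be a linear map from operators on H_0 to operators on H_1 with Choi–Jamiołkowski operator M. Then 𝓜 is completely positive (i.e., for every finite-dimensional Hilbert space K, the map 𝓜 ⊗ id_{L(K)} sends positive semidefinite operators on H_0 ⊗ K to positive semidefinite operators on H_1 ⊗ K) if and only if M is positive semidefinite. -/
open Matrix
open scoped ComplexOrder

noncomputable section

namespace QLink

lemma psd_outer {α : Type} [Fintype α] (v : α → ℂ) :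
    (Matrix.vecMulVec v (star v)).PosSemidef := by
  have : Matrix.vecMulVec v (star v) = (Matrix.replicateCol Unit v) * (Matrix.replicateCol Unit v)ᴴ := by
    ext i j
    simp [Matrix.mul_apply, Matrix.vecMulVec, Matrix.replicateCol]
  rw [this]
  exact Matrix.posSemidef_self_mul_conjTranspose _

lemma choi_apply {α0 α1 : Type} [DecidableEq α0]
    (f : Matrix α0 α0 ℂ →ₗ[ℂ] Matrix α1 α1 ℂ) (i j : α0) (m n : α1) :
    choi f (m, i) (n, j) = f (single i j 1) m n := by
  show f (fun x y => Matrix.vecMulVec (maxEntVec α0) (star (maxEntVec α0)) (x, i) (y, j)) m n = _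
  have h : (fun x y => Matrix.vecMulVec (maxEntVec α0) (star (maxEntVec α0)) (x, i) (y, j)
      : Matrix α0 α0 ℂ) = single i j 1 := by
    funext x y
    by_cases hx : x = i <;> by_cases hy : y = j
    · simp [Matrix.vecMulVec, maxEntVec, Matrix.single, hx, hy]
    · simp [Matrix.vecMulVec, maxEntVec, Matrix.single, hx, hy, Ne.symm hy]
    · simp [Matrix.vecMulVec, maxEntVec, Matrix.single, hx, Ne.symm hx, hy]
    · simp [Matrix.vecMulVec, maxEntVec, Matrix.single, hx, Ne.symm hx, hy, Ne.symm hy]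
  rw [h]

lemma mapTensorId_apply {α0 α1 K : Type} [Fintype α0] [DecidableEq α0] [Fintype K]
    (f : Matrix α0 α0 ℂ →ₗ[ℂ] Matrix α1 α1 ℂ) (X : Matrix (α0 × K) (α0 × K) ℂ)
    (m n : α1) (a b : K) :
    mapTensorId f K X (m, a) (n, b)
      = ∑ i : α0, ∑ j : α0, X (i, a) (j, b) * f (single i j 1) m n := by
  show f (fun x y => X (x, a) (y, b)) m n = _
  conv_lhs => rw [matrix_eq_sum_single (fun x y => X (x, a) (y, b) : Matrix α0 α0 ℂ)]
  simp only [map_sum, Matrix.sum_apply]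
  refine Finset.sum_congr rfl fun i _ => Finset.sum_congr rfl fun j _ => ?_
  have h : single i j (X (i, a) (j, b)) = X (i, a) (j, b) • single i j (1 : ℂ) := by
    rw [smul_single, smul_eq_mul, mul_one]
  rw [h, LinearMap.map_smul, Matrix.smul_apply, smul_eq_mul]

lemma sum4_comm {ι1 ι2 ι3 ι4 : Type} [Fintype ι1] [Fintype ι2] [Fintype ι3] [Fintype ι4]
    (g : ι1 → ι2 → ι3 → ι4 → ℂ) :
    ∑ i, ∑ j, ∑ l, ∑ k, g i j l k = ∑ k, ∑ l, ∑ i, ∑ j, g i j l k := by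
  have L : ∑ x : ι1 × ι2 × ι3 × ι4, g x.1 x.2.1 x.2.2.1 x.2.2.2
      = ∑ i, ∑ j, ∑ l, ∑ k, g i j l k := by
    simp only [Fintype.sum_prod_type]
  have R : ∑ x : ι4 × ι3 × ι1 × ι2, g x.2.2.1 x.2.2.2 x.2.1 x.1
      = ∑ k, ∑ l, ∑ i, ∑ j, g i j l k := by
    simp only [Fintype.sum_prod_type]
  rw [← L, ← R]
  exact Fintype.sum_equiv
    ⟨fun x => (x.2.2.2, x.2.2.1, x.1, x.2.1), fun y => (y.2.2.1, y.2.2.2, y.2.1, y.1),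
      fun _ => rfl, fun _ => rfl⟩ _ _ (fun _ => rfl)

open scoped MatrixOrder in
lemma posSemidef_exists_conjTranspose_mul_self {n : Type} [Fintype n] [DecidableEq n]
    {A : Matrix n n ℂ} (hA : A.PosSemidef) : ∃ B : Matrix n n ℂ, A = Bᴴ * B := by
  obtain ⟨B, hB⟩ := CStarAlgebra.nonneg_iff_eq_star_mul_self.mp hA.nonneg
  exact ⟨B, hB⟩

/-- A linear map `𝓜` is completely positive iff its Choi-Jamiolkowski
operator is positive semidefinite. -/
theorem completelyPositive_iff_choi_posSemidef {α0 α1 : Type} [Fintype α0] [Fintype α1]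
    [DecidableEq α0] [DecidableEq α1]
    (f : Matrix α0 α0 ℂ →ₗ[ℂ] Matrix α1 α1 ℂ) :
    (∀ (K : Type) [Fintype K] [DecidableEq K],
        ∀ X : Matrix (α0 × K) (α0 × K) ℂ, X.PosSemidef → (mapTensorId f K X).PosSemidef) ↔
      (choi f).PosSemidef := by
  constructor
  · intro h
    exact h α0 (Matrix.vecMulVec (maxEntVec α0) (star (maxEntVec α0))) (psd_outer _)
  · intro hM K _ _ X hX
    obtain ⟨B, hB⟩ := posSemidef_exists_conjTranspose_mul_self hM
    obtain ⟨C, hC⟩ := posSemidef_exists_conjTranspose_mul_self hX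
    set D : Matrix ((α1 × α0) × (α0 × K)) (α1 × K) ℂ :=
      fun p q => ∑ i : α0, B p.1 (q.1, i) * C p.2 (i, q.2) with hD
    have key : mapTensorId f K X = Dᴴ * D := by
      ext ⟨m, a⟩ ⟨n, b⟩
      rw [mapTensorId_apply]
      have hchoi : ∀ i j : α0, (f (single i j 1) : Matrix α1 α1 ℂ) m n
          = ∑ k : α1 × α0, star (B k (m, i)) * B k (n, j) := by
        intro i j
        rw [← choi_apply, hB]
        simp [Matrix.mul_apply]
      have hXe : ∀ i j : α0, X (i, a) (j, b) = ∑ l : α0 × K, star (C l (i, a)) * C l (j, b) := by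
        intro i j
        rw [hC]
        simp [Matrix.mul_apply]
      simp only [hchoi, hXe]
      calc ∑ i : α0, ∑ j : α0, (∑ l : α0 × K, star (C l (i, a)) * C l (j, b)) *
              (∑ k : α1 × α0, star (B k (m, i)) * B k (n, j))
          = ∑ i : α0, ∑ j : α0, ∑ k : α1 × α0, ∑ l : α0 × K,
              (star (C l (i, a)) * C l (j, b)) * (star (B k (m, i)) * B k (n, j)) := by
            simp only [Finset.sum_mul, Finset.mul_sum]
        _ = ∑ l : α0 × K, ∑ k : α1 × α0, ∑ i : α0, ∑ j : α0,
              (star (C l (i, a)) * C l (j, b)) * (star (B k (m, i)) * B k (n, j)) :=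
            sum4_comm _
        _ = (Dᴴ * D) (m, a) (n, b) := by
            conv_rhs => rw [Matrix.mul_apply, Fintype.sum_prod_type, Finset.sum_comm]
            refine Finset.sum_congr rfl fun l _ => Finset.sum_congr rfl fun k _ => ?_
            simp only [Matrix.conjTranspose_apply]; simp only [hD]
            simp only [star_sum, star_mul', Finset.sum_mul, Finset.mul_sum]
            rw [Finset.sum_comm]
            refine Finset.sum_congr rfl fun i _ => Finset.sum_congr rfl fun j _ => ?_
            ring
    rw [key]
    exact Matrix.posSemidef_conjTranspose_mul_self D

end QLink
end
end
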